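/- Let ρ be a real number with √3/2 < ρ ≤ 1 and let W = {(1/4, ρ/2), (3/4, ρ/2)} ⊆ Q. Then there exists a point p ∈ Q such that μ({q ∈ Q : dist(q, p) < infDist(q, W)}) > ρ/4. (For aspect ratio greater than √3/2, Barney's first point steals strictly more than a quarter of the board from the 1×2 grid.) -/

import Mathlib

open MeasureTheory Metric Set
open scoped ENNReal

/-- The point `(x, y)` in the Euclidean plane. -/
noncomputable def pt (x y : ℝ) : EuclideanSpace ℝ (Fin 2) :=
  (WithLp.equiv 2 (Fin 2 → ℝ)).symm ![x, y]

/-- The rectangular board `[0,1] × [0,ρ]`. -/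
def board (ρ : ℝ) : Set (EuclideanSpace ℝ (Fin 2)) :=
  {q | q 0 ∈ Set.Icc (0:ℝ) 1 ∧ q 1 ∈ Set.Icc (0:ℝ) ρ}

lemma pt_apply_zero (x y : ℝ) : pt x y 0 = x := rfl

lemma pt_apply_one (x y : ℝ) : pt x y 1 = y := rfl

lemma dist_two (q w : EuclideanSpace ℝ (Fin 2)) :
    dist q w = Real.sqrt ((q 0 - w 0) ^ 2 + (q 1 - w 1) ^ 2) := by
  rw [EuclideanSpace.dist_eq]
  simp [Fin.sum_univ_two, Real.dist_eq, sq_abs]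

lemma infDist_pair {E : Type*} [PseudoMetricSpace E] (x w₁ w₂ : E) :
    Metric.infDist x ({w₁, w₂} : Set E) = min (dist x w₁) (dist x w₂) := by
  have h : ({w₁, w₂} : Set E) = {w₁} ∪ {w₂} := by
    rw [Set.singleton_union]
  rw [Metric.infDist, h, EMetric.infEdist_union, EMetric.infEdist_singleton,
    EMetric.infEdist_singleton]
  rw [ENNReal.toReal_min (edist_ne_top _ _) (edist_ne_top _ _)]
  rw [dist_edist, dist_edist]

set_option maxHeartbeats 2000000 in
/-- For aspect ratio `ρ > √3/2`, against the `1 × 2` grid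
`W = {(1/4, ρ/2), (3/4, ρ/2)}`, Barney's first point can steal strictly
more than a quarter of the board. -/
theorem stmt_18 (ρ : ℝ) (hρ1 : Real.sqrt 3 / 2 < ρ) (hρ2 : ρ ≤ 1)
    (W : Set (EuclideanSpace ℝ (Fin 2)))
    (hW : W = {pt (1/4) (ρ/2), pt (3/4) (ρ/2)}) :
    ∃ p ∈ board ρ,
      volume {q | q ∈ board ρ ∧ dist q p < infDist q W} > ENNReal.ofReal (ρ / 4) := by
  -- basic bounds on ρ
  have hρ0 : 0 < ρ := lt_trans (by positivity) hρ1
  have h3 : 3 < 4 * ρ ^ 2 := by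
    have h : Real.sqrt 3 < 2 * ρ := by linarith
    have := (Real.sqrt_lt' (by linarith)).1 h
    nlinarith
  have hρ56 : 5 / 6 < ρ := by nlinarith
  -- the construction parameters
  set b : ℝ := (4 * ρ ^ 2 - 3) / 12 with hb_def
  set a : ℝ := 2 * ρ * b / 3 with ha_def
  have hb : 0 < b := by rw [hb_def]; linarith
  have hb12 : b ≤ 1 / 12 := by rw [hb_def]; nlinarith
  have ha : 0 < a := by rw [ha_def]; positivity
  have ha' : a ≤ 1 / 18 := by rw [ha_def]; nlinarith
  set D : ℝ := (a ^ 2 + b ^ 2) / (2 * b) with hD_def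
  set K : ℝ := (1 - 2 * a) / (2 * b) with hK_def
  have hK : 0 < K := by rw [hK_def]; apply div_pos <;> linarith
  have hDb : 2 * b * D = a ^ 2 + b ^ 2 := by rw [hD_def]; field_simp
  have hKb : 2 * b * K = 1 - 2 * a := by rw [hK_def]; field_simp
  have hD : 0 < D := by rw [hD_def]; positivity
  have hD' : D ≤ 13 / 216 := by
    nlinarith [hDb, sq_nonneg a, sq_nonneg b, sq_nonneg (a - b)]
  have hKlb : 16 / 3 ≤ K := by nlinarith [hKb]
  set X : ℝ := 1 / 2 + (2 * ρ / 3 - D) / K with hX_def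
  have h2ρD : 0 < 2 * ρ / 3 - D := by nlinarith
  have hX1 : 1 / 2 < X := by
    rw [hX_def]
    have := div_pos h2ρD hK
    linarith
  have hXK : K * (X - 1 / 2) = 2 * ρ / 3 - D := by
    rw [hX_def]; field_simp; ring
  have hX2 : X ≤ 1 := by
    have h1 : (2 * ρ / 3 - D) ≤ 2 / 3 := by linarith
    have h2 : (2 * ρ / 3 - D) / K ≤ 1 / 2 := by
      rw [div_le_iff₀ hK]; linarith
    rw [hX_def]; linarith
  -- the lines bounding the stolen region
  set ℓ₁ : ℝ → ℝ := fun x => 2 * ρ / 3 * x + (ρ / 3 - D) with hℓ₁_def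
  set ℓ₂ : ℝ → ℝ := fun x => K * (X - x) with hℓ₂_def
  -- the chosen point
  refine ⟨pt (1 / 4 + a) (ρ / 2 - b), ?_, ?_⟩
  · constructor
    · rw [pt_apply_zero]; constructor <;> [linarith; linarith]
    · rw [pt_apply_one]; constructor <;> [linarith; linarith]
  -- the two trapezoids under ℓ₁ and ℓ₂
  set T₁ : Set (ℝ × ℝ) := regionBetween (fun _ => 0) ℓ₁ (Ioo 0 (1 / 2)) with hT₁_def
  set T₂ : Set (ℝ × ℝ) := regionBetween (fun _ => 0) ℓ₂ (Ioo (1 / 2) X) with hT₂_def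
  have hcont₁ : Continuous ℓ₁ := by rw [hℓ₁_def]; continuity
  have hcont₂ : Continuous ℓ₂ := by rw [hℓ₂_def]; continuity
  have hmT₁ : MeasurableSet T₁ :=
    measurableSet_regionBetween measurable_const hcont₁.measurable measurableSet_Ioo
  have hmT₂ : MeasurableSet T₂ :=
    measurableSet_regionBetween measurable_const hcont₂.measurable measurableSet_Ioo
  -- transfer map
  set F : EuclideanSpace ℝ (Fin 2) → ℝ × ℝ :=
    (MeasurableEquiv.finTwoArrow : (Fin 2 → ℝ) ≃ᵐ ℝ × ℝ) ∘
      (MeasurableEquiv.toLp 2 (Fin 2 → ℝ)).symm with hF_def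
  have hFmp : MeasurePreserving F volume volume :=
    (volume_preserving_finTwoArrow ℝ).comp
      (EuclideanSpace.volume_preserving_symm_measurableEquiv_toLp (Fin 2))
  have hFq : ∀ q : EuclideanSpace ℝ (Fin 2), F q = (q 0, q 1) := fun q => by
    rw [hF_def]; rfl
  -- the subset relation
  have hsub : F ⁻¹' (T₁ ∪ T₂) ⊆ {q | q ∈ board ρ ∧ dist q (pt (1 / 4 + a) (ρ / 2 - b)) < infDist q W} := by
    intro q hq
    rw [Set.mem_preimage, hFq q] at hq
    set x : ℝ := q 0 with hx_def
    set y : ℝ := q 1 with hy_def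
    -- from membership in T₁ ∪ T₂ derive the coordinate bounds
    have hcoord : (0 < x ∧ x < 1 ∧ 0 < y ∧ y < ℓ₁ x ∧ y < ℓ₂ x) := by
      rcases hq with h | h
      · obtain ⟨hxs, hys⟩ := h
        simp only [Set.mem_Ioo] at hxs hys
        have hy1 : y < ℓ₁ x := hys.2
        have hy2 : ℓ₁ x < ℓ₂ x := by
          have hid : 2 * b * (ℓ₂ x - ℓ₁ x) = 1 / 2 - x := by
            have e1 : 2 * b * (ℓ₂ x - ℓ₁ x)
                = 2 * b * (K * (X - 1/2)) + (2 * b * K) * (1/2 - x)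
                  - 2 * b * (2 * ρ / 3 * x + (ρ / 3 - D)) := by
              rw [hℓ₂_def, hℓ₁_def]; ring
            rw [e1, hXK, hKb, ha_def]; ring
          have hb2 : (0:ℝ) < 2 * b := by linarith
          have h' : 0 < 2 * b * (ℓ₂ x - ℓ₁ x) := by rw [hid]; linarith
          have := (mul_pos_iff_of_pos_left hb2).1 h'
          linarith
        exact ⟨hxs.1, by linarith, hys.1, hy1, by linarith⟩
      · obtain ⟨hxs, hys⟩ := h
        simp only [Set.mem_Ioo] at hxs hys
        have hy2 : y < ℓ₂ x := hys.2
        have hy1 : ℓ₂ x < ℓ₁ x := by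
          have hid : 2 * b * (ℓ₂ x - ℓ₁ x) = 1 / 2 - x := by
            have e1 : 2 * b * (ℓ₂ x - ℓ₁ x)
                = 2 * b * (K * (X - 1/2)) + (2 * b * K) * (1/2 - x)
                  - 2 * b * (2 * ρ / 3 * x + (ρ / 3 - D)) := by
              rw [hℓ₂_def, hℓ₁_def]; ring
            rw [e1, hXK, hKb, ha_def]; ring
          have hb2 : (0:ℝ) < 2 * b := by linarith
          have h' : 0 < 2 * b * (ℓ₁ x - ℓ₂ x) := by
            have : 2 * b * (ℓ₁ x - ℓ₂ x) = -(2 * b * (ℓ₂ x - ℓ₁ x)) := by ring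
            rw [this, hid]; linarith [hxs.1]
          have := (mul_pos_iff_of_pos_left hb2).1 h'
          linarith
        exact ⟨by linarith, by linarith, hys.1, by linarith, hy2⟩
    obtain ⟨hx0, hx1, hy0, hyℓ₁, hyℓ₂⟩ := hcoord
    have hℓ₁x : ℓ₁ x = 2 * ρ / 3 * x + (ρ / 3 - D) := by rw [hℓ₁_def]
    have hℓ₂x : 2 * b * ℓ₂ x = (2 * b * K) * (X - 1/2) + (2 * b * K) * (1/2 - x) := by
      rw [hℓ₂_def]; ring
    have hyρ : y < ρ := by
      have : ℓ₁ x ≤ ρ := by rw [hℓ₁x]; nlinarith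
      linarith
    constructor
    · exact ⟨⟨le_of_lt hx0, le_of_lt hx1⟩, ⟨le_of_lt hy0, le_of_lt hyρ⟩⟩
    · -- distance inequalities
      have hd1 : dist q (pt (1 / 4 + a) (ρ / 2 - b)) < dist q (pt (1/4) (ρ/2)) := by
        rw [dist_two, dist_two, pt_apply_zero, pt_apply_one, pt_apply_zero, pt_apply_one]
        apply Real.sqrt_lt_sqrt (by positivity)
        have hmul : 2 * b * y < 2 * b * ℓ₁ x :=
          (mul_lt_mul_iff_right₀ (by linarith)).2 hyℓ₁
        rw [hℓ₁x] at hmul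
        nlinarith [hmul, hDb]
      have hd2 : dist q (pt (1 / 4 + a) (ρ / 2 - b)) < dist q (pt (3/4) (ρ/2)) := by
        rw [dist_two, dist_two, pt_apply_zero, pt_apply_one, pt_apply_zero, pt_apply_one]
        apply Real.sqrt_lt_sqrt (by positivity)
        have hmul : 2 * b * y < 2 * b * ℓ₂ x :=
          (mul_lt_mul_iff_right₀ (by linarith)).2 hyℓ₂
        rw [hℓ₂x] at hmul
        have hXK2 : (2 * b * K) * (X - 1/2) = 2 * b * (2 * ρ / 3 - D) := by
          rw [mul_assoc, hXK]
        rw [hXK2, hKb] at hmul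
        nlinarith [hmul, hDb]
      rw [hW, infDist_pair]
      exact lt_min hd1 hd2
  -- measure computation
  have hmeasT : volume (T₁ ∪ T₂)
      = ENNReal.ofReal (ρ / 4 - D / 2) + ENNReal.ofReal (K * (X - 1/2) ^ 2 / 2) := by
    have hdisj : Disjoint T₁ T₂ := by
      rw [Set.disjoint_left]
      rintro ⟨z1, z2⟩ h1 h2
      have e1 : z1 < 1/2 := h1.1.2
      have e2 : 1/2 < z1 := h2.1.1
      linarith
    rw [measure_union hdisj hmT₂]
    have hzero_int : ∀ u v : ℝ, IntegrableOn (fun _ : ℝ => (0:ℝ)) (Ioo u v) volume :=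
      fun u v => integrableOn_const measure_Ioo_lt_top.ne
    have hint₁ : IntegrableOn ℓ₁ (Ioo (0:ℝ) (1/2)) volume :=
      (hcont₁.integrableOn_Icc).mono_set Set.Ioo_subset_Icc_self
    have hint₂ : IntegrableOn ℓ₂ (Ioo (1/2:ℝ) X) volume :=
      (hcont₂.integrableOn_Icc).mono_set Set.Ioo_subset_Icc_self
    have hv₁ : volume T₁ = ENNReal.ofReal (ρ / 4 - D / 2) := by
      rw [hT₁_def, Measure.volume_eq_prod,
        volume_regionBetween_eq_integral (hzero_int 0 (1/2)) hint₁ measurableSet_Ioo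
          (fun x hx => by
            simp only [Set.mem_Ioo] at hx
            show (0:ℝ) ≤ ℓ₁ x
            simp only [hℓ₁_def]
            nlinarith [hx.1])]
      congr 1
      simp only [Pi.sub_apply, sub_zero]
      rw [← integral_Ioc_eq_integral_Ioo,
        ← intervalIntegral.integral_of_le (by norm_num : (0:ℝ) ≤ 1/2)]
      simp only [hℓ₁_def]
      have hii : IntervalIntegrable (fun x : ℝ => 2 * ρ / 3 * x) volume 0 (1/2) :=
        (continuous_const.mul continuous_id).intervalIntegrable _ _
      have hic : IntervalIntegrable (fun _ : ℝ => ρ / 3 - D) volume 0 (1/2) :=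
        intervalIntegrable_const
      rw [intervalIntegral.integral_add hii hic, intervalIntegral.integral_const,
        intervalIntegral.integral_const_mul, integral_id]
      simp; ring
    have hv₂ : volume T₂ = ENNReal.ofReal (K * (X - 1/2) ^ 2 / 2) := by
      rw [hT₂_def, Measure.volume_eq_prod,
        volume_regionBetween_eq_integral (hzero_int (1/2) X) hint₂ measurableSet_Ioo
          (fun x hx => by
            simp only [Set.mem_Ioo] at hx
            show (0:ℝ) ≤ ℓ₂ x
            simp only [hℓ₂_def]
            have := mul_nonneg hK.le (by linarith : (0:ℝ) ≤ X - x)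
            linarith)]
      congr 1
      simp only [Pi.sub_apply, sub_zero]
      rw [← integral_Ioc_eq_integral_Ioo,
        ← intervalIntegral.integral_of_le (le_of_lt hX1)]
      simp only [hℓ₂_def]
      have h2 : ∀ x : ℝ, K * (X - x) = K * X + (-K) * x := fun x => by ring
      simp only [h2]
      have hii : IntervalIntegrable (fun x : ℝ => (-K) * x) volume (1/2) X :=
        (continuous_const.mul continuous_id).intervalIntegrable _ _
      have hic : IntervalIntegrable (fun _ : ℝ => K * X) volume (1/2) X :=
        intervalIntegrable_const
      rw [intervalIntegral.integral_add hic hii, intervalIntegral.integral_const,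
        intervalIntegral.integral_const_mul, integral_id]
      simp; ring
    rw [hv₁, hv₂]
  -- the key quantitative inequality
  have hkey : D < K * (X - 1/2) ^ 2 := by
    have keyb : (a ^ 2 + b ^ 2) * (1 - 2 * a) < (4 * b * ρ / 3 - (a ^ 2 + b ^ 2)) ^ 2 := by
      have hρ3 : ρ ^ 3 ≤ 1 := by nlinarith
      have h1 : (4 * ρ / 3) * ((4 * ρ ^ 2 / 9 + 1) * b) ≤ 2 * b := by nlinarith
      have h2b : 2 * b = (4 * ρ ^ 2 - 3) / 6 := by rw [hb_def]; ring
      have h2 : (4 * ρ ^ 2 - 3) / 6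
          ≤ (4 * ρ ^ 2 - 3) / 3 - (4 * ρ / 3) * ((4 * ρ ^ 2 / 9 + 1) * b)
            + ((4 * ρ ^ 2 / 9 + 1) * b) ^ 2 := by
        nlinarith [sq_nonneg ((4 * ρ ^ 2 / 9 + 1) * b)]
      have hexp : (4 * b * ρ / 3 - (a ^ 2 + b ^ 2)) ^ 2 - (a ^ 2 + b ^ 2) * (1 - 2 * a)
          = b ^ 2 * ((4 * ρ ^ 2 - 3) / 3 - (4 * ρ / 3) * ((4 * ρ ^ 2 / 9 + 1) * b)
            + ((4 * ρ ^ 2 / 9 + 1) * b) ^ 2) := by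
        rw [ha_def]; ring
      nlinarith [mul_pos (mul_pos hb hb) (lt_of_lt_of_le (by linarith : (0:ℝ) < (4 * ρ ^ 2 - 3) / 6) h2)]
    have e1 : (2 * b) ^ 2 * (D * K) = (a ^ 2 + b ^ 2) * (1 - 2 * a) := by
      calc (2 * b) ^ 2 * (D * K) = (2 * b * D) * (2 * b * K) := by ring
        _ = (a ^ 2 + b ^ 2) * (1 - 2 * a) := by rw [hDb, hKb]
    have e2 : (2 * b) ^ 2 * (2 * ρ / 3 - D) ^ 2 = (4 * b * ρ / 3 - (a ^ 2 + b ^ 2)) ^ 2 := by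
      rw [← hDb]; ring
    have hDK : D * K < (2 * ρ / 3 - D) ^ 2 := by
      have h4b : 0 < (2 * b) ^ 2 := by positivity
      have := keyb
      rw [← e1, ← e2] at this
      exact (mul_lt_mul_iff_right₀ h4b).1 this
    have e3 : K * (K * (X - 1/2) ^ 2) = (2 * ρ / 3 - D) ^ 2 := by
      rw [← hXK]; ring
    nlinarith [hDK, hK, e3]
  -- conclude
  have hD2 : 0 ≤ ρ / 4 - D / 2 := by nlinarith
  have hA2 : 0 ≤ K * (X - 1/2) ^ 2 / 2 := by positivity
  calc ENNReal.ofReal (ρ / 4)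
      < ENNReal.ofReal (ρ / 4 - D / 2 + K * (X - 1/2) ^ 2 / 2) := by
        rw [ENNReal.ofReal_lt_ofReal_iff (by nlinarith)]
        linarith
    _ = ENNReal.ofReal (ρ / 4 - D / 2) + ENNReal.ofReal (K * (X - 1/2) ^ 2 / 2) :=
        ENNReal.ofReal_add hD2 hA2
    _ = volume (T₁ ∪ T₂) := hmeasT.symm
    _ = volume (F ⁻¹' (T₁ ∪ T₂)) :=
        (hFmp.measure_preimage ((hmT₁.union hmT₂).nullMeasurableSet)).symm
    _ ≤ volume {q | q ∈ board ρ ∧ dist q (pt (1 / 4 + a) (ρ / 2 - b)) < infDist q W} :=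
        measure_mono hsub
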